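/- arXiv:1903.08379 — 2 statements merged into one kernel-verified Lean document; each statement's English description precedes it below -/
import Mathlib

section
/- For all m ≥ 1, all 1 ≤ r ≤ m−1, and all n ≥ k ≥ 1, the higher order Stirling numbers satisfy S^(m)(n,k) = Σ_{i=k}^n S^(m−r)(i,k) · S^(r)(n,i). -/
/-- `m`-th order ("hyper") partitions of a finite set `s`:
a chain `(P₁, …, P_m)` where `P₁` is a partition of `s` and each `P_{j+1}`
is a partition of the set of blocks of `P_j`. For `m = 0` it is `s` itself
(a single trivial object). -/
def HyperPartition : (m : ℕ) → {α : Type} → [DecidableEq α] → Finset α → Type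
  | 0, _, _, _ => PUnit
  | m + 1, _, _, s => (P : Finpartition s) × HyperPartition m P.parts

/-- The number of blocks of the outermost partition of a hyper partition
(for `m = 0`, by convention, the cardinality of the underlying set). -/
def HyperPartition.outerBlocks :
    (m : ℕ) → {α : Type} → [DecidableEq α] → {s : Finset α} →
      HyperPartition m s → ℕ
  | 0, _, _, s, _ => s.card
  | 1, _, _, _, p => p.1.parts.card
  | m + 2, _, _, _, p => HyperPartition.outerBlocks (m + 1) p.2

/-- `|℘ₙ^(m)|`: the number of `m`-th order partitions of an `n`-element set. -/
noncomputable def hyperBell (m n : ℕ) : ℕ :=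
  Nat.card (HyperPartition m (Finset.univ : Finset (Fin n)))

/-- The `m`-th order Stirling number `S^(m)(n,k)`: the number of `m`-th order
partitions of an `n`-element set whose outermost partition has exactly `k` blocks. -/
noncomputable def hyperStirling (m n k : ℕ) : ℕ :=
  Nat.card {p : HyperPartition m (Finset.univ : Finset (Fin n)) //
    HyperPartition.outerBlocks m p = k}

/-- The ordinary Stirling number of the second kind `S(n,k)`: the number of
set partitions of an `n`-element set into exactly `k` blocks. -/
noncomputable def stirling (n k : ℕ) : ℕ :=
  Nat.card {P : Finpartition (Finset.univ : Finset (Fin n)) // P.parts.card = k}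

/-- Composition `f(g(x))` of formal power series (intended for `g` with zero
constant term, in which case `coeff n (g ^ i) = 0` for `i > n`). -/
noncomputable def psComp (f g : PowerSeries ℚ) : PowerSeries ℚ :=
  PowerSeries.mk fun n =>
    PowerSeries.coeff (R := ℚ) n
      (∑ i ∈ Finset.range (n + 1), PowerSeries.C (R := ℚ) (PowerSeries.coeff (R := ℚ) i f) * g ^ i)

/-- The iterated exponential series: `E₀ = exp x`, `E_{m+1} = exp (E_m - 1)`. -/
noncomputable def E : ℕ → PowerSeries ℚ
  | 0 => PowerSeries.exp ℚ
  | m + 1 => psComp (PowerSeries.exp ℚ) (E m - 1)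

/-- The `m`-th order Bell number `Bₙ^(m) = n! · [xⁿ] E_m(x)`. -/
noncomputable def bell (m n : ℕ) : ℚ :=
  (n.factorial : ℚ) * PowerSeries.coeff (R := ℚ) n (E m)

-- AUX START
noncomputable def countHP (m : ℕ) {γ : Type} [DecidableEq γ] (s : Finset γ) (k : ℕ) : ℕ :=
  Nat.card {p : HyperPartition m s // HyperPartition.outerBlocks m p = k}

lemma outer_succ (m : ℕ) {γ : Type} [DecidableEq γ] {s : Finset γ}
    (p : HyperPartition (m + 1) s) :
    HyperPartition.outerBlocks (m + 1) p = HyperPartition.outerBlocks m p.2 := by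
  cases m with
  | zero => rfl
  | succ m => rfl

instance finpartitionFinite {γ : Type} [DecidableEq γ] (s : Finset γ) :
    Finite (Finpartition s) := by
  refine Finite.of_injective
    (fun P : Finpartition s => (⟨P.parts, ?_⟩ : {u // u ∈ s.powerset.powerset})) ?_
  · rw [Finset.mem_powerset]
    intro b hb
    rw [Finset.mem_powerset]
    exact P.le hb
  · intro P Q h
    exact Finpartition.ext (congrArg Subtype.val h)

instance hpFinite : ∀ (m : ℕ) {γ : Type} [DecidableEq γ] (s : Finset γ),
    Finite (HyperPartition m s)
  | 0, _, _, _ => inferInstanceAs (Finite PUnit.{1})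
  | m + 1, γ, _, s => by
    have : ∀ P : Finpartition s, Finite (HyperPartition m P.parts) :=
      fun P => hpFinite m P.parts
    exact inferInstanceAs (Finite ((P : Finpartition s) × HyperPartition m P.parts))

lemma outer_le : ∀ (m : ℕ) {γ : Type} [DecidableEq γ] {s : Finset γ}
    (p : HyperPartition m s), HyperPartition.outerBlocks m p ≤ s.card
  | 0, _, _, _, _ => le_refl _
  | m + 1, _, _, s, p => by
    rw [outer_succ]
    exact le_trans (outer_le m p.2) p.1.card_parts_le_card

def hpSigmaEquiv (m : ℕ) {γ : Type} [DecidableEq γ] (s : Finset γ) (k : ℕ) :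
    {p : HyperPartition (m + 1) s // HyperPartition.outerBlocks (m + 1) p = k} ≃
      Σ P : Finpartition s,
        {x : HyperPartition m P.parts // HyperPartition.outerBlocks m x = k} where
  toFun p := ⟨p.1.1, p.1.2, by rw [← outer_succ]; exact p.2⟩
  invFun q := ⟨⟨q.1, q.2.1⟩, (outer_succ m (⟨q.1, q.2.1⟩ : HyperPartition (m + 1) s)).trans q.2.2⟩
  left_inv p := rfl
  right_inv q := rfl

lemma countHP_succ (m : ℕ) {γ : Type} [DecidableEq γ] (s : Finset γ) (k : ℕ)
    [Fintype (Finpartition s)] :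
    countHP (m + 1) s k = ∑ P : Finpartition s, countHP m P.parts k := by
  unfold countHP
  rw [Nat.card_congr (hpSigmaEquiv m s k)]
  have : ∀ P : Finpartition s,
      Fintype {x : HyperPartition m P.parts // HyperPartition.outerBlocks m x = k} :=
    fun P => Fintype.ofFinite _
  rw [Nat.card_eq_fintype_card, Fintype.card_sigma]
  exact Finset.sum_congr rfl fun P _ => (Nat.card_eq_fintype_card).symm

lemma countHP_zero {γ : Type} [DecidableEq γ] (s : Finset γ) (i : ℕ) :
    countHP 0 s i = if i = s.card then 1 else 0 := by
  unfold countHP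
  by_cases h : i = s.card
  · subst h
    rw [if_pos rfl]
    have : Unique {p : HyperPartition 0 s // HyperPartition.outerBlocks 0 p = s.card} :=
      ⟨⟨⟨PUnit.unit, rfl⟩⟩, fun x => Subtype.ext rfl⟩
    exact Nat.card_unique
  · rw [if_neg h]
    have : IsEmpty {p : HyperPartition 0 s // HyperPartition.outerBlocks 0 p = i} :=
      ⟨fun x => h (x.2.symm)⟩
    exact Nat.card_of_isEmpty

lemma countHP_eq_zero {γ : Type} [DecidableEq γ] {s : Finset γ} {i : ℕ}
    (h : s.card < i) (r : ℕ) : countHP r s i = 0 := by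
  unfold countHP
  have : IsEmpty {p : HyperPartition r s // HyperPartition.outerBlocks r p = i} :=
    ⟨fun x => absurd (x.2 ▸ outer_le r x.1) (by omega)⟩
  exact Nat.card_of_isEmpty

section Congr
variable {γ δ : Type} [DecidableEq γ] [DecidableEq δ] {s : Finset γ} {t : Finset δ}

def fmap (e : {x // x ∈ s} ≃ {y // y ∈ t}) (b : Finset γ) : Finset δ :=
  (s.attach.filter fun x => x.1 ∈ b).image fun x => (e x : δ)

lemma mem_fmap (e : {x // x ∈ s} ≃ {y // y ∈ t}) {b : Finset γ} {y : δ} :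
    y ∈ fmap e b ↔ ∃ h : y ∈ t, ((e.symm ⟨y, h⟩ : {x // x ∈ s}) : γ) ∈ b := by
  simp only [fmap, Finset.mem_image, Finset.mem_filter, Finset.mem_attach, true_and]
  constructor
  · rintro ⟨x, hx, rfl⟩
    refine ⟨(e x).2, ?_⟩
    simpa using hx
  · rintro ⟨h, hx⟩
    exact ⟨e.symm ⟨y, h⟩, hx, by simp⟩

lemma fmap_fmap (e : {x // x ∈ s} ≃ {y // y ∈ t}) {b : Finset γ} (hb : b ⊆ s) :
    fmap e.symm (fmap e b) = b := by
  ext x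
  rw [mem_fmap]
  constructor
  · rintro ⟨h, hx⟩
    rw [mem_fmap] at hx
    obtain ⟨h2, hx⟩ := hx
    simpa using hx
  · intro hx
    refine ⟨hb hx, ?_⟩
    rw [mem_fmap]
    refine ⟨by simp, ?_⟩
    simpa using hx

def pmap (e : {x // x ∈ s} ≃ {y // y ∈ t}) (P : Finpartition s) : Finpartition t where
  parts := P.parts.image (fmap e)
  supIndep := by
    rw [Finset.supIndep_iff_pairwiseDisjoint]
    rintro b1 hb1 b2 hb2 hne
    simp only [Finset.coe_image, Set.mem_image, Finset.mem_coe] at hb1 hb2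
    obtain ⟨c1, hc1, rfl⟩ := hb1
    obtain ⟨c2, hc2, rfl⟩ := hb2
    have hc : c1 ≠ c2 := by rintro rfl; exact hne rfl
    have hd : Disjoint c1 c2 := P.disjoint hc1 hc2 hc
    simp only [Function.onFun, id]
    rw [Finset.disjoint_left] at hd ⊢
    intro y hy1 hy2
    rw [mem_fmap] at hy1 hy2
    obtain ⟨h, hy1⟩ := hy1
    obtain ⟨h', hy2⟩ := hy2
    exact hd hy1 hy2
  sup_parts := by
    ext y
    rw [Finset.mem_sup]
    constructor
    · rintro ⟨b, hb, hy⟩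
      simp only [Finset.mem_image] at hb
      obtain ⟨c, hc, rfl⟩ := hb
      simp only [id] at hy
      rw [mem_fmap] at hy
      exact hy.1
    · intro hy
      obtain ⟨c, hc, hxc⟩ := P.exists_mem (a := ((e.symm ⟨y, hy⟩ : {x // x ∈ s}) : γ))
        (e.symm ⟨y, hy⟩).2
      exact ⟨fmap e c, Finset.mem_image_of_mem _ hc, (mem_fmap e).2 ⟨hy, hxc⟩⟩
  bot_notMem := by
    intro h
    simp only [Finset.bot_eq_empty, Finset.mem_image] at h
    obtain ⟨c, hc, hcc⟩ := h
    obtain ⟨x, hx⟩ := P.nonempty_of_mem_parts hc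
    have hxs : x ∈ s := P.le hc hx
    have : (e ⟨x, hxs⟩ : δ) ∈ fmap e c := (mem_fmap e).2 ⟨(e ⟨x, hxs⟩).2, by simpa using hx⟩
    rw [hcc] at this
    exact absurd this (Finset.notMem_empty _)

lemma pmap_parts (e : {x // x ∈ s} ≃ {y // y ∈ t}) (P : Finpartition s) :
    (pmap e P).parts = P.parts.image (fmap e) := by simp [pmap]

lemma pmap_pmap (e : {x // x ∈ s} ≃ {y // y ∈ t}) (P : Finpartition s) :
    pmap e.symm (pmap e P) = P := by
  apply Finpartition.ext
  rw [pmap_parts, pmap_parts, Finset.image_image]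
  rw [show ((fmap e.symm) ∘ (fmap e)) = fun b => fmap e.symm (fmap e b) from rfl]
  calc P.parts.image (fun b => fmap e.symm (fmap e b)) = P.parts.image id := by
        apply Finset.image_congr
        intro b hb
        exact fmap_fmap e (P.le hb)
    _ = P.parts := Finset.image_id

def pequiv (e : {x // x ∈ s} ≃ {y // y ∈ t}) : Finpartition s ≃ Finpartition t where
  toFun := pmap e
  invFun := pmap e.symm
  left_inv P := pmap_pmap e P
  right_inv Q := by
    have h := pmap_pmap e.symm Q
    rwa [Equiv.symm_symm] at h

def partsEquiv (e : {x // x ∈ s} ≃ {y // y ∈ t}) (P : Finpartition s) :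
    {b // b ∈ P.parts} ≃ {b // b ∈ (pmap e P).parts} where
  toFun b := ⟨fmap e b.1, by rw [pmap_parts]; exact Finset.mem_image_of_mem _ b.2⟩
  invFun b := ⟨fmap e.symm b.1, by
    have h : fmap e.symm b.1 ∈ (pmap e.symm (pmap e P)).parts := by
      rw [pmap_parts]; exact Finset.mem_image_of_mem _ b.2
    rwa [pmap_pmap] at h⟩
  left_inv b := Subtype.ext (fmap_fmap e (P.le b.2))
  right_inv b := Subtype.ext (by
    have h := fmap_fmap e.symm ((pmap e P).le b.2)
    rwa [Equiv.symm_symm] at h)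

end Congr

theorem countHP_congr : ∀ (m : ℕ) {γ δ : Type} [DecidableEq γ] [DecidableEq δ]
    {s : Finset γ} {t : Finset δ},
    ({x // x ∈ s} ≃ {y // y ∈ t}) → ∀ k : ℕ, countHP m s k = countHP m t k
  | 0, γ, δ, _, _, s, t, e, k => by
    have hcard : s.card = t.card := by
      rw [← Fintype.card_coe, ← Fintype.card_coe]
      exact Fintype.card_congr e
    rw [countHP_zero, countHP_zero, hcard]
  | m + 1, γ, δ, _, _, s, t, e, k => by
    have i1 : Fintype (Finpartition s) := Fintype.ofFinite _
    have i2 : Fintype (Finpartition t) := Fintype.ofFinite _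
    rw [countHP_succ, countHP_succ]
    rw [← Equiv.sum_comp (pequiv e) (fun P : Finpartition t => countHP m P.parts k)]
    exact Finset.sum_congr rfl fun P _ => countHP_congr m (partsEquiv e P) k

lemma countHP_eq (m : ℕ) {γ : Type} [DecidableEq γ] (s : Finset γ) (k : ℕ) :
    countHP m s k = hyperStirling m s.card k := by
  have e : {x // x ∈ s} ≃ {y // y ∈ (Finset.univ : Finset (Fin s.card))} :=
    s.equivFin.trans (Equiv.subtypeUnivEquiv (fun y => Finset.mem_univ y)).symm
  rw [countHP_congr m e k]
  rfl

theorem mainCount (a : ℕ) : ∀ (r : ℕ) {γ : Type} [DecidableEq γ] (s : Finset γ) (k : ℕ),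
    countHP (a + r) s k =
      ∑ i ∈ Finset.Icc 0 s.card, countHP r s i * hyperStirling a i k
  | 0, γ, _, s, k => by
    have : ∀ i ∈ Finset.Icc 0 s.card,
        countHP 0 s i * hyperStirling a i k =
          if i = s.card then hyperStirling a s.card k else 0 := by
      intro i _
      rw [countHP_zero]
      by_cases h : i = s.card
      · subst h; simp
      · simp [h]
    rw [Finset.sum_congr rfl this, Finset.sum_ite_eq' (Finset.Icc 0 s.card) s.card
      (fun _ => hyperStirling a s.card k)]
    rw [if_pos (by simp)]
    rw [show a + 0 = a from rfl, countHP_eq]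
  | r + 1, γ, _, s, k => by
    have i1 : Fintype (Finpartition s) := Fintype.ofFinite _
    rw [show a + (r + 1) = (a + r) + 1 from rfl]
    rw [countHP_succ]
    have step : ∀ P : Finpartition s,
        countHP (a + r) P.parts k =
          ∑ i ∈ Finset.Icc 0 s.card, countHP r P.parts i * hyperStirling a i k := by
      intro P
      rw [mainCount a r P.parts k]
      apply Finset.sum_subset
      · exact Finset.Icc_subset_Icc le_rfl P.card_parts_le_card
      · intro i _ hi
        have : P.parts.card < i := by
          simp only [Finset.mem_Icc] at hi
          omega
        rw [countHP_eq_zero this]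
        ring
    rw [Finset.sum_congr rfl fun P _ => step P, Finset.sum_comm]
    refine Finset.sum_congr rfl fun i _ => ?_
    rw [← Finset.sum_mul, countHP_succ]


/-- `S^(m)(n,k) = Σ_{i=k}^n S^(m−r)(i,k) · S^(r)(n,i)` for `m ≥ 1`,
`1 ≤ r ≤ m−1`, `n ≥ k ≥ 1`. -/
theorem stmt8 (m r n k : ℕ) (hm : 1 ≤ m) (hr : 1 ≤ r) (hrm : r ≤ m - 1)
    (hk : 1 ≤ k) (hkn : k ≤ n) :
    hyperStirling m n k =
      ∑ i ∈ Finset.Icc k n, hyperStirling (m - r) i k * hyperStirling r n i := by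
  have hm' : m = (m - r) + r := by omega
  have h1 : hyperStirling m n k = countHP ((m - r) + r) (Finset.univ : Finset (Fin n)) k := by
    rw [← hm']; rfl
  rw [h1, mainCount]
  have hcard : (Finset.univ : Finset (Fin n)).card = n := by simp
  rw [hcard]
  have h2 : ∀ i ∈ Finset.Icc 0 n,
      countHP r (Finset.univ : Finset (Fin n)) i * hyperStirling (m - r) i k =
        hyperStirling (m - r) i k * hyperStirling r n i := by
    intro i _
    rw [countHP_eq, hcard, mul_comm]
  rw [Finset.sum_congr rfl h2]
  symm
  apply Finset.sum_subset
  · exact Finset.Icc_subset_Icc (by omega) le_rfl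
  · intro i hi hik
    simp only [Finset.mem_Icc] at hi hik
    have hik' : i < k := by omega
    have : hyperStirling (m - r) i k = 0 := by
      have := countHP_eq (m - r) (Finset.univ : Finset (Fin i)) k
      rw [show (Finset.univ : Finset (Fin i)).card = i by simp] at this
      rw [← this]
      exact countHP_eq_zero (by simp; omega) _
    rw [this, zero_mul]
end

section
/- For all m ≥ 1 and n ≥ 1, the number of one-block m-th order partitions of an n-element set equals the (m−1)-th order Bell number: S^(m)(n,1) = B_n^(m−1). -/
open Finset

variable {α β : Type*} [DecidableEq α] [DecidableEq β]

/-- Map a block through a bijection between two finsets (given as subtype equiv). -/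
def bmap {s : Finset α} {t : Finset β} (e : {x // x ∈ s} ≃ {y // y ∈ t})
    (b : Finset α) : Finset β :=
  (t.attach.filter (fun y => ((e.symm y : {x // x ∈ s}) : α) ∈ b)).image Subtype.val

lemma mem_bmap {s : Finset α} {t : Finset β} (e : {x // x ∈ s} ≃ {y // y ∈ t})
    {b : Finset α} {y : β} :
    y ∈ bmap e b ↔ ∃ hy : y ∈ t, ((e.symm ⟨y, hy⟩ : {x // x ∈ s}) : α) ∈ b := by
  simp [bmap, Finset.mem_image, Finset.mem_filter, Subtype.exists]

lemma bmap_subset {s : Finset α} {t : Finset β} (e : {x // x ∈ s} ≃ {y // y ∈ t})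
    (b : Finset α) : bmap e b ⊆ t := by
  intro y hy
  rw [mem_bmap] at hy
  exact hy.choose

lemma mem_bmap_of {s : Finset α} {t : Finset β} (e : {x // x ∈ s} ≃ {y // y ∈ t})
    {b : Finset α} {x : α} (hxs : x ∈ s) (hx : x ∈ b) :
    ((e ⟨x, hxs⟩ : {y // y ∈ t}) : β) ∈ bmap e b := by
  rw [mem_bmap]
  refine ⟨(e ⟨x, hxs⟩).2, ?_⟩
  have : (⟨((e ⟨x, hxs⟩ : {y // y ∈ t}) : β), (e ⟨x, hxs⟩).2⟩ : {y // y ∈ t}) = e ⟨x, hxs⟩ :=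
    Subtype.ext rfl
  rw [this, Equiv.symm_apply_apply]
  exact hx

lemma bmap_bmap {s : Finset α} {t : Finset β} (e : {x // x ∈ s} ≃ {y // y ∈ t})
    {b : Finset α} (hb : b ⊆ s) : bmap e.symm (bmap e b) = b := by
  ext x
  rw [mem_bmap]
  constructor
  · rintro ⟨hx, h⟩
    rw [Equiv.symm_symm, mem_bmap] at h
    obtain ⟨hy, h⟩ := h
    have : (⟨((e ⟨x, hx⟩ : {y // y ∈ t}) : β), hy⟩ : {y // y ∈ t}) = e ⟨x, hx⟩ :=
      Subtype.ext rfl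
    rw [this, Equiv.symm_apply_apply] at h
    exact h
  · intro hx
    refine ⟨hb hx, ?_⟩
    rw [Equiv.symm_symm]
    exact mem_bmap_of e (hb hx) hx

lemma bmap_nonempty {s : Finset α} {t : Finset β} (e : {x // x ∈ s} ≃ {y // y ∈ t})
    {b : Finset α} (hb : b ⊆ s) (h : b.Nonempty) : (bmap e b).Nonempty := by
  obtain ⟨x, hx⟩ := h
  exact ⟨_, mem_bmap_of e (hb hx) hx⟩

lemma bmap_disjoint {s : Finset α} {t : Finset β} (e : {x // x ∈ s} ≃ {y // y ∈ t})
    {b c : Finset α} (h : Disjoint b c) : Disjoint (bmap e b) (bmap e c) := by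
  rw [Finset.disjoint_left]
  intro y hyb hyc
  rw [mem_bmap] at hyb hyc
  obtain ⟨hy, hmb⟩ := hyb
  obtain ⟨_, hmc⟩ := hyc
  exact Finset.disjoint_left.1 h hmb hmc

/-- Transport a finpartition through a bijection between two finsets. -/
def Finpartition.transfer {s : Finset α} {t : Finset β}
    (e : {x // x ∈ s} ≃ {y // y ∈ t}) (P : Finpartition s) : Finpartition t where
  parts := P.parts.image (bmap e)
  supIndep := by
    rw [Finset.supIndep_iff_pairwiseDisjoint]
    rintro x hx y hy hne
    simp only [coe_image, Set.mem_image, mem_coe] at hx hy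
    obtain ⟨b, hb, rfl⟩ := hx
    obtain ⟨c, hc, rfl⟩ := hy
    have hbc : b ≠ c := fun h => hne (by rw [h])
    exact bmap_disjoint e (P.disjoint hb hc hbc)
  sup_parts := by
    ext y
    rw [Finset.mem_sup]
    constructor
    · rintro ⟨b', hb', hy⟩
      simp only [mem_image] at hb'
      obtain ⟨b, hb, rfl⟩ := hb'
      exact bmap_subset e b hy
    · intro hy
      obtain ⟨b, hb, hxb⟩ := P.exists_mem (a := ((e.symm ⟨y, hy⟩ : {x // x ∈ s}) : α))
        (e.symm ⟨y, hy⟩).2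
      exact ⟨bmap e b, mem_image_of_mem _ hb, (mem_bmap e).2 ⟨hy, hxb⟩⟩
  bot_notMem := by
    simp only [Finset.bot_eq_empty, mem_image]
    rintro ⟨b, hb, hemp⟩
    have := bmap_nonempty e (P.le hb) (P.nonempty_of_mem_parts hb)
    rw [hemp] at this
    exact Finset.not_nonempty_empty this

lemma Finpartition.transfer_transfer {s : Finset α} {t : Finset β}
    (e : {x // x ∈ s} ≃ {y // y ∈ t}) (P : Finpartition s) :
    (P.transfer e).transfer e.symm = P := by
  ext1
  show ((P.parts.image (bmap e)).image (bmap e.symm)) = P.parts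
  rw [Finset.image_image]
  have : ∀ b ∈ P.parts, (bmap e.symm ∘ bmap e) b = b := fun b hb =>
    bmap_bmap e (P.le hb)
  rw [Finset.image_congr (fun b hb => this b hb)]
  simp

lemma Finpartition.transfer_parts_card {s : Finset α} {t : Finset β}
    (e : {x // x ∈ s} ≃ {y // y ∈ t}) (P : Finpartition s) :
    (P.transfer e).parts.card = P.parts.card := by
  show (P.parts.image (bmap e)).card = _
  rw [Finset.card_image_of_injOn]
  intro b hb c hc h
  have := congrArg (bmap e.symm) h
  rwa [bmap_bmap e (P.le hb), bmap_bmap e (P.le hc)] at this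

/-- Equivalence of finpartitions through a bijection between two finsets. -/
def Finpartition.transferEquiv {s : Finset α} {t : Finset β}
    (e : {x // x ∈ s} ≃ {y // y ∈ t}) : Finpartition s ≃ Finpartition t where
  toFun := Finpartition.transfer e
  invFun := Finpartition.transfer e.symm
  left_inv := Finpartition.transfer_transfer e
  right_inv := fun Q => by
    have := Finpartition.transfer_transfer e.symm Q
    rwa [Equiv.symm_symm] at this

section HP
variable {α β : Type} [DecidableEq α] [DecidableEq β]

/-- Fintype instance for hyper partitions. -/
def hpFintype : (m : ℕ) → {α : Type} → [DecidableEq α] → (s : Finset α) →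
    Fintype (HyperPartition m s)
  | 0, _, _, _ => inferInstanceAs (Fintype PUnit)
  | m + 1, _, _, s =>
    letI : ∀ P : Finpartition s, Fintype (HyperPartition m P.parts) :=
      fun P => hpFintype m P.parts
    inferInstanceAs (Fintype ((P : Finpartition s) × HyperPartition m P.parts))

attribute [local instance] hpFintype

lemma hp_card_eq (m : ℕ) : ∀ {α β : Type} [DecidableEq α] [DecidableEq β]
    (s : Finset α) (t : Finset β), s.card = t.card →
    Nat.card (HyperPartition m s) = Nat.card (HyperPartition m t) := by
  induction m with
  | zero => intro α β _ _ s t _; rfl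
  | succ m ih =>
    intro α β _ _ s t hst
    have e : {x // x ∈ s} ≃ {y // y ∈ t} := Finset.equivOfCardEq hst
    show Nat.card ((P : Finpartition s) × HyperPartition m P.parts) =
      Nat.card ((P : Finpartition t) × HyperPartition m P.parts)
    rw [Nat.card_eq_fintype_card, Nat.card_eq_fintype_card, Fintype.card_sigma,
      Fintype.card_sigma]
    rw [Fintype.sum_equiv (Finpartition.transferEquiv e) _ _ ?_]
    intro P
    rw [← Nat.card_eq_fintype_card, ← Nat.card_eq_fintype_card]
    exact ih _ _ (Finpartition.transfer_parts_card e P).symm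

lemma hp_card_univ (m : ℕ) {α : Type} [DecidableEq α] (s : Finset α) :
    Nat.card (HyperPartition m s) = hyperBell m s.card :=
  hp_card_eq m s (Finset.univ : Finset (Fin s.card)) (by simp)

lemma hyperBell_zero (n : ℕ) : hyperBell 0 n = 1 := by
  show Nat.card PUnit = 1
  simp

/-- Grouping a sum over finpartitions by the number of parts. -/
lemma sum_finpartition_group {M : Type} [AddCommMonoid M] (n : ℕ) (w : ℕ → M) :
    ∑ P : Finpartition (Finset.univ : Finset (Fin n)), w P.parts.card =
      ∑ k ∈ Finset.range (n + 1), (stirling n k) • w k := by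
  classical
  rw [← Finset.sum_fiberwise_of_maps_to (g := fun P : Finpartition (Finset.univ : Finset (Fin n)) => P.parts.card) (t := Finset.range (n+1)) ?_ (fun P => w P.parts.card)]
  · refine Finset.sum_congr rfl fun k _ => ?_
    rw [Finset.sum_congr rfl (g := fun _ => w k)
      (fun P hP => by rw [(Finset.mem_filter.1 hP).2]), Finset.sum_const]
    congr 1
    rw [stirling, Nat.card_eq_fintype_card, Fintype.card_subtype]
  · intro P _
    rw [Finset.mem_range, Nat.lt_succ_iff]
    simpa using P.card_parts_le_card

lemma hyperBell_succ (m n : ℕ) :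
    hyperBell (m + 1) n = ∑ k ∈ Finset.range (n + 1), stirling n k * hyperBell m k := by
  show Nat.card ((P : Finpartition (Finset.univ : Finset (Fin n))) ×
      HyperPartition m P.parts) = _
  rw [Nat.card_eq_fintype_card, Fintype.card_sigma]
  have : ∀ P : Finpartition (Finset.univ : Finset (Fin n)),
      Fintype.card (HyperPartition m P.parts) = hyperBell m P.parts.card := fun P => by
    rw [← Nat.card_eq_fintype_card]; exact hp_card_univ m P.parts
  rw [Finset.sum_congr rfl (fun P _ => this P), sum_finpartition_group n (hyperBell m)]
  simp [smul_eq_mul]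

end HP

section PartOne
attribute [local instance] hpFintype

/-- Commuting a subtype with a sigma when the predicate depends on the whole pair. -/
def sigmaSubtypeEquiv {ι : Type*} {f : ι → Type*} (p : ∀ i, f i → Prop) :
    {x : Σ i, f i // p x.1 x.2} ≃ Σ i, {y : f i // p i y} where
  toFun x := ⟨x.1.1, ⟨x.1.2, x.2⟩⟩
  invFun x := ⟨⟨x.1, x.2.1⟩, x.2.2⟩
  left_inv x := rfl
  right_inv x := rfl

lemma parts_eq_of_card_one {α : Type} [DecidableEq α] {s : Finset α}
    (P : Finpartition s) (h : P.parts.card = 1) : P.parts = {s} := by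
  obtain ⟨b, hb⟩ := Finset.card_eq_one.1 h
  have hsup : P.parts.sup id = s := P.sup_parts
  rw [hb, Finset.sup_singleton, id] at hsup
  rw [hb, hsup]

lemma hp_outer_one (m : ℕ) : ∀ {α : Type} [DecidableEq α] (s : Finset α), s.Nonempty →
    Nat.card {p : HyperPartition (m + 1) s //
        HyperPartition.outerBlocks (m + 1) p = 1} =
      Nat.card (HyperPartition m s) := by
  induction m with
  | zero =>
    intro α _ s hs
    have hne : s ≠ ⊥ := by rw [Finset.bot_eq_empty]; exact hs.ne_empty
    have h2 : Nat.card (HyperPartition 0 s) = 1 :=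
      Nat.card_eq_one_iff_unique.2
        ⟨inferInstanceAs (Subsingleton PUnit), inferInstanceAs (Nonempty PUnit)⟩
    rw [h2]
    refine Nat.card_eq_one_iff_unique.2 ⟨⟨?_⟩, ⟨⟨⟨Finpartition.indiscrete hne,
      PUnit.unit⟩, ?_⟩⟩⟩
    · rintro ⟨⟨P, u⟩, hP⟩ ⟨⟨Q, v⟩, hQ⟩
      cases u; cases v
      have hP' : P.parts.card = 1 := hP
      have hQ' : Q.parts.card = 1 := hQ
      have : P = Q := Finpartition.ext
        (by rw [parts_eq_of_card_one P hP', parts_eq_of_card_one Q hQ'])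
      subst this
      rfl
    · show (Finpartition.indiscrete hne).parts.card = 1
      simp [Finpartition.indiscrete]
  | succ m ih =>
    intro α _ s hs
    have hne : s ≠ ⊥ := by rw [Finset.bot_eq_empty]; exact hs.ne_empty
    have key : {p : HyperPartition (m + 2) s //
          HyperPartition.outerBlocks (m + 2) p = 1} ≃
        Σ P : Finpartition s, {q : HyperPartition (m + 1) P.parts //
          HyperPartition.outerBlocks (m + 1) q = 1} :=
      sigmaSubtypeEquiv (fun (P : Finpartition s)
        (q : HyperPartition (m + 1) P.parts) =>
          HyperPartition.outerBlocks (m + 1) q = 1)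
    rw [Nat.card_congr key]
    show _ = Nat.card ((P : Finpartition s) × HyperPartition m P.parts)
    rw [Nat.card_eq_fintype_card, Nat.card_eq_fintype_card, Fintype.card_sigma,
      Fintype.card_sigma]
    refine Finset.sum_congr rfl fun P _ => ?_
    rw [← Nat.card_eq_fintype_card, ← Nat.card_eq_fintype_card]
    exact ih P.parts (P.parts_nonempty hne)

lemma hyperStirling_one (m n : ℕ) (hn : 1 ≤ n) :
    hyperStirling (m + 1) n 1 = hyperBell m n := by
  apply hp_outer_one
  exact ⟨⟨0, hn⟩, Finset.mem_univ _⟩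

end PartOne

section Series
open PowerSeries

lemma coeff_psComp (f g : PowerSeries ℚ) (n : ℕ) :
    PowerSeries.coeff (R := ℚ) n (psComp f g) =
      ∑ i ∈ Finset.range (n + 1),
        PowerSeries.coeff (R := ℚ) i f * PowerSeries.coeff (R := ℚ) n (g ^ i) := by
  rw [psComp, coeff_mk, map_sum]
  exact Finset.sum_congr rfl fun i _ => by rw [coeff_C_mul]

lemma coeff_pow_eq_zero' {g : PowerSeries ℚ} (hg : constantCoeff (R := ℚ) g = 0) :
    ∀ (i n : ℕ), n < i → PowerSeries.coeff (R := ℚ) n (g ^ i) = 0 := by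
  intro i
  induction i with
  | zero => intro n h; exact absurd h (Nat.not_lt_zero n)
  | succ i ih =>
    intro n h
    rw [pow_succ, coeff_mul]
    apply Finset.sum_eq_zero
    rintro ⟨a, b⟩ hab
    rw [Finset.HasAntidiagonal.mem_antidiagonal] at hab
    rcases Nat.eq_zero_or_pos b with hb | hb
    · subst hb
      simp only [coeff_zero_eq_constantCoeff, hg, mul_zero]
    · have : a < i := by omega
      rw [ih a this, zero_mul]

lemma psComp_one (g : PowerSeries ℚ) : psComp 1 g = 1 := by
  ext n
  rw [coeff_psComp]
  rw [Finset.sum_eq_single 0 (fun i _ hi => by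
      rw [PowerSeries.coeff_one, if_neg hi, zero_mul])
    (fun h => absurd (Finset.mem_range.2 (Nat.succ_pos n)) h)]
  simp

lemma psComp_sub (f₁ f₂ g : PowerSeries ℚ) :
    psComp (f₁ - f₂) g = psComp f₁ g - psComp f₂ g := by
  ext n
  simp only [coeff_psComp, map_sub, sub_mul, Finset.sum_sub_distrib]

lemma psComp_mul {g : PowerSeries ℚ} (hg : constantCoeff (R := ℚ) g = 0)
    (f₁ f₂ : PowerSeries ℚ) :
    psComp (f₁ * f₂) g = psComp f₁ g * psComp f₂ g := by
  ext n
  set R := Finset.range (n + 1) with hR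
  have key : ∀ p : ℕ × ℕ, p ∈ Finset.HasAntidiagonal.antidiagonal n →
      PowerSeries.coeff (R := ℚ) p.1 (psComp f₁ g) * PowerSeries.coeff (R := ℚ) p.2 (psComp f₂ g) =
      ∑ i ∈ R, ∑ j ∈ R, (PowerSeries.coeff (R := ℚ) i f₁ * PowerSeries.coeff (R := ℚ) j f₂) *
        (PowerSeries.coeff (R := ℚ) p.1 (g ^ i) * PowerSeries.coeff (R := ℚ) p.2 (g ^ j)) := by
    rintro ⟨a, b⟩ hab
    rw [Finset.HasAntidiagonal.mem_antidiagonal] at hab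
    rw [coeff_psComp, coeff_psComp]
    rw [Finset.sum_subset (Finset.range_subset_range.2 (by omega : a + 1 ≤ n + 1))
      (fun i _ hi => by
        rw [coeff_pow_eq_zero' hg i a (by simp at hi ⊢; omega), mul_zero])]
    rw [Finset.sum_subset (Finset.range_subset_range.2 (by omega : b + 1 ≤ n + 1))
      (fun j _ hj => by
        rw [coeff_pow_eq_zero' hg j b (by simp at hj ⊢; omega), mul_zero])]
    rw [Finset.sum_mul_sum]
    exact Finset.sum_congr rfl fun i _ => Finset.sum_congr rfl fun j _ => by ring
  rw [coeff_mul, Finset.sum_congr rfl key, Finset.sum_comm]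
  have swap2 : ∀ i ∈ R, ∑ p ∈ Finset.HasAntidiagonal.antidiagonal n,
      ∑ j ∈ R, (PowerSeries.coeff (R := ℚ) i f₁ * PowerSeries.coeff (R := ℚ) j f₂) *
        (PowerSeries.coeff (R := ℚ) p.1 (g ^ i) * PowerSeries.coeff (R := ℚ) p.2 (g ^ j)) =
      ∑ j ∈ R, (PowerSeries.coeff (R := ℚ) i f₁ * PowerSeries.coeff (R := ℚ) j f₂) *
        PowerSeries.coeff (R := ℚ) n (g ^ (i + j)) := by
    intro i _
    rw [Finset.sum_comm]
    refine Finset.sum_congr rfl fun j _ => ?_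
    rw [← Finset.mul_sum, pow_add, coeff_mul]
  rw [Finset.sum_congr rfl swap2]
  -- now RHS done; transform LHS
  rw [coeff_psComp]
  have lhs : ∀ k ∈ R, PowerSeries.coeff (R := ℚ) k (f₁ * f₂) * PowerSeries.coeff (R := ℚ) n (g ^ k) =
      ∑ p ∈ Finset.HasAntidiagonal.antidiagonal k,
        (PowerSeries.coeff (R := ℚ) p.1 f₁ * PowerSeries.coeff (R := ℚ) p.2 f₂) *
          PowerSeries.coeff (R := ℚ) n (g ^ (p.1 + p.2)) := by
    intro k _
    rw [coeff_mul, Finset.sum_mul]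
    exact Finset.sum_congr rfl fun p hp => by
      rw [Finset.HasAntidiagonal.mem_antidiagonal] at hp; rw [hp]
  rw [Finset.sum_congr rfl lhs]
  -- both sides are sums of F p over different index sets
  rw [← Finset.sum_biUnion (by
    intro a _ b _ hab
    simp only [Function.onFun, Finset.disjoint_left, Finset.HasAntidiagonal.mem_antidiagonal]
    intro p hpa hpb
    exact hab (by omega))]
  rw [← Finset.sum_product']
  apply Finset.sum_subset
  · intro p hp
    simp only [Finset.mem_biUnion, Finset.HasAntidiagonal.mem_antidiagonal] at hp
    obtain ⟨k, hk, hpk⟩ := hp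
    simp only [Finset.mem_product, hR, Finset.mem_range] at *
    omega
  · intro p hp hnp
    have : n < p.1 + p.2 := by
      by_contra hle
      push_neg at hle
      exact hnp (Finset.mem_biUnion.2 ⟨p.1 + p.2, by
        simp only [hR, Finset.mem_range]; omega, Finset.HasAntidiagonal.mem_antidiagonal.2 rfl⟩)
    rw [coeff_pow_eq_zero' hg _ n this, mul_zero]

lemma psComp_pow {g : PowerSeries ℚ} (hg : constantCoeff (R := ℚ) g = 0)
    (f : PowerSeries ℚ) (j : ℕ) : psComp (f ^ j) g = (psComp f g) ^ j := by
  induction j with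
  | zero => simpa using psComp_one g
  | succ j ih => rw [pow_succ, psComp_mul hg, ih, pow_succ]

lemma constantCoeff_psComp (f g : PowerSeries ℚ) :
    constantCoeff (R := ℚ) (psComp f g) = constantCoeff (R := ℚ) f := by
  rw [← PowerSeries.coeff_zero_eq_constantCoeff_apply,
    ← PowerSeries.coeff_zero_eq_constantCoeff_apply, coeff_psComp]
  simp

lemma psComp_assoc {f g h : PowerSeries ℚ} (hg : constantCoeff (R := ℚ) g = 0)
    (hh : constantCoeff (R := ℚ) h = 0) :
    psComp (psComp f g) h = psComp f (psComp g h) := by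
  ext n
  rw [coeff_psComp, coeff_psComp]
  have rhs : ∀ j ∈ Finset.range (n + 1),
      PowerSeries.coeff (R := ℚ) j f * PowerSeries.coeff (R := ℚ) n (psComp g h ^ j) =
      PowerSeries.coeff (R := ℚ) j f * ∑ i ∈ Finset.range (n + 1),
        PowerSeries.coeff (R := ℚ) i (g ^ j) * PowerSeries.coeff (R := ℚ) n (h ^ i) := by
    intro j _
    rw [← psComp_pow hh, coeff_psComp]
  rw [Finset.sum_congr rfl rhs]
  have lhs : ∀ i ∈ Finset.range (n + 1),
      PowerSeries.coeff (R := ℚ) i (psComp f g) * PowerSeries.coeff (R := ℚ) n (h ^ i) =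
      ∑ j ∈ Finset.range (n + 1),
        PowerSeries.coeff (R := ℚ) j f * (PowerSeries.coeff (R := ℚ) i (g ^ j) *
          PowerSeries.coeff (R := ℚ) n (h ^ i)) := by
    intro i hi
    rw [coeff_psComp, Finset.sum_subset (Finset.range_subset_range.2
      (by simp at hi; omega : i + 1 ≤ n + 1)) (fun j _ hj => by
        rw [coeff_pow_eq_zero' hg j i (by simp at hj ⊢; omega), mul_zero]),
      Finset.sum_mul]
    exact Finset.sum_congr rfl fun j _ => by ring
  rw [Finset.sum_congr rfl lhs, Finset.sum_comm]
  exact Finset.sum_congr rfl fun j _ => by rw [Finset.mul_sum]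

lemma constantCoeff_E (m : ℕ) : constantCoeff (R := ℚ) (E m) = 1 := by
  cases m with
  | zero => exact PowerSeries.constantCoeff_exp
  | succ m =>
    show constantCoeff (R := ℚ) (psComp (PowerSeries.exp ℚ) (E m - 1)) = 1
    rw [constantCoeff_psComp]
    exact PowerSeries.constantCoeff_exp

lemma constantCoeff_E_sub_one (m : ℕ) : constantCoeff (R := ℚ) (E m - 1) = 0 := by
  rw [map_sub, constantCoeff_E]; simp

lemma constantCoeff_exp_sub_one : constantCoeff (R := ℚ) (PowerSeries.exp ℚ - 1) = 0 := by
  rw [map_sub, PowerSeries.constantCoeff_exp]; simp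

lemma E_comp (m : ℕ) : E (m + 1) = psComp (E m) (PowerSeries.exp ℚ - 1) := by
  induction m with
  | zero => rfl
  | succ m ih =>
    show psComp (PowerSeries.exp ℚ) (E (m + 1) - 1) =
      psComp (E (m + 1)) (PowerSeries.exp ℚ - 1)
    conv_rhs => rw [show E (m + 1) = psComp (PowerSeries.exp ℚ) (E m - 1) from rfl]
    rw [psComp_assoc (constantCoeff_E_sub_one m) constantCoeff_exp_sub_one]
    congr 1
    rw [psComp_sub, psComp_one, ih]

end Series

section Count
open Finset

variable {n j : ℕ}

/-- From a finpartition with an injective labelling of parts, build a function. -/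
def Phi (x : Σ P : Finpartition (Finset.univ : Finset (Fin n)),
    ({b // b ∈ P.parts} ↪ Fin j)) : Fin n → Fin j :=
  fun a => x.2 ⟨x.1.part a, x.1.part_mem.2 (Finset.mem_univ a)⟩

lemma part_eq_fiber (x : Σ P : Finpartition (Finset.univ : Finset (Fin n)),
    ({b // b ∈ P.parts} ↪ Fin j)) (a : Fin n) :
    x.1.part a = Finset.univ.filter (fun y => Phi x y = Phi x a) := by
  ext y
  simp only [Finset.mem_filter, Finset.mem_univ, true_and]
  constructor
  · intro hy
    show x.2 _ = x.2 _
    congr 1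
    exact Subtype.ext ((x.1.mem_part_iff_part_eq_part (Finset.mem_univ y)
      (Finset.mem_univ a)).1 hy)
  · intro h
    have := x.2.injective h
    have hpp : x.1.part y = x.1.part a := congrArg Subtype.val this
    rw [← hpp]
    exact x.1.mem_part (Finset.mem_univ y)

lemma Phi_injective : Function.Injective (Phi (n := n) (j := j)) := by
  rintro ⟨P, g⟩ ⟨Q, h⟩ hfg
  have hparts : ∀ a : Fin n, P.part a = Q.part a := by
    intro a
    rw [part_eq_fiber ⟨P, g⟩ a, part_eq_fiber ⟨Q, h⟩ a, hfg]
  have hPQ : P = Q := by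
    apply Finpartition.ext
    ext b
    constructor
    · intro hb
      obtain ⟨a, ha⟩ := P.nonempty_of_mem_parts hb
      rw [← P.part_eq_of_mem hb ha, hparts]
      exact Q.part_mem.2 (Finset.mem_univ a)
    · intro hb
      obtain ⟨a, ha⟩ := Q.nonempty_of_mem_parts hb
      rw [← Q.part_eq_of_mem hb ha, ← hparts]
      exact P.part_mem.2 (Finset.mem_univ a)
  subst hPQ
  congr 1
  apply Function.Embedding.ext
  rintro ⟨b, hb⟩
  obtain ⟨a, ha⟩ := P.nonempty_of_mem_parts hb
  have hba : b = P.part a := (P.part_eq_of_mem hb ha).symm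
  have e1 : (⟨b, hb⟩ : {b // b ∈ P.parts}) = ⟨P.part a, P.part_mem.2 (Finset.mem_univ a)⟩ :=
    Subtype.ext hba
  rw [e1]
  exact congrFun hfg a

lemma Phi_surjective : Function.Surjective (Phi (n := n) (j := j)) := by
  intro f
  classical
  let st : Setoid (Fin n) := Setoid.ker f
  haveI : DecidableRel st.r := fun a b => inferInstanceAs (Decidable (f a = f b))
  let P := Finpartition.ofSetoid st
  have key : ∀ a b : Fin n, b ∈ P.part a ↔ f a = f b := fun a b =>
    Finpartition.mem_part_ofSetoid_iff_rel
  have hne : ∀ b : {b // b ∈ P.parts}, b.1.Nonempty := fun b =>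
    P.nonempty_of_mem_parts b.2
  let g0 : {b // b ∈ P.parts} → Fin j := fun b => f (b.1.min' (hne b))
  have hmem : ∀ b : {b // b ∈ P.parts}, b.1.min' (hne b) ∈ b.1 := fun b =>
    Finset.min'_mem _ _
  have hpart : ∀ b : {b // b ∈ P.parts}, b.1 = P.part (b.1.min' (hne b)) := fun b =>
    (P.part_eq_of_mem b.2 (hmem b)).symm
  have ginj : Function.Injective g0 := by
    rintro b c (h : f _ = f _)
    have : c.1.min' (hne c) ∈ P.part (b.1.min' (hne b)) := (key _ _).2 h
    rw [← hpart b] at this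
    exact Subtype.ext (P.eq_of_mem_parts b.2 c.2 this (hmem c))
  refine ⟨⟨P, ⟨g0, ginj⟩⟩, funext fun a => ?_⟩
  show g0 ⟨P.part a, _⟩ = f a
  have h1 : (P.part a).min' (hne ⟨P.part a, P.part_mem.2 (Finset.mem_univ a)⟩) ∈ P.part a :=
    Finset.min'_mem _ _
  exact ((key a _).1 h1).symm

lemma stirling_eq_zero {n k : ℕ} (h : n < k) : stirling n k = 0 := by
  rw [stirling, Nat.card_eq_zero]
  left
  refine ⟨fun ⟨P, hP⟩ => ?_⟩
  have := P.card_parts_le_card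
  simp only [Finset.card_univ, Fintype.card_fin] at this
  omega

lemma card_fun_eq (n j : ℕ) :
    j ^ n = ∑ k ∈ Finset.range (n + 1), stirling n k * Nat.descFactorial j k := by
  classical
  have h1 : Fintype.card (Fin n → Fin j) = j ^ n := by
    simp [Fintype.card_fun]
  have h2 := Fintype.card_congr
    (Equiv.ofBijective (Phi (n := n) (j := j)) ⟨Phi_injective, Phi_surjective⟩)
  rw [Fintype.card_sigma] at h2
  rw [← h1, ← h2]
  have h3 : ∀ P : Finpartition (Finset.univ : Finset (Fin n)),
      Fintype.card ({b // b ∈ P.parts} ↪ Fin j) = Nat.descFactorial j P.parts.card := by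
    intro P
    rw [Fintype.card_embedding_eq, Fintype.card_fin]
    congr 1
    exact Fintype.card_coe _
  rw [Finset.sum_congr rfl fun P _ => h3 P,
    sum_finpartition_group n (fun k => Nat.descFactorial j k)]
  simp [smul_eq_mul]

lemma binom_id (n j : ℕ) :
    ((j : ℚ)) ^ n = ∑ k ∈ Finset.range (j + 1),
      (j.choose k : ℚ) * ((k.factorial : ℚ) * (stirling n k : ℚ)) := by
  have h0 := card_fun_eq n j
  have hcast : ((j : ℚ)) ^ n = ∑ k ∈ Finset.range (n + 1),
      (j.choose k : ℚ) * ((k.factorial : ℚ) * (stirling n k : ℚ)) := by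
    have := congrArg (fun x : ℕ => (x : ℚ)) h0
    push_cast at this
    rw [this]
    refine Finset.sum_congr rfl fun k _ => ?_
    rw [Nat.descFactorial_eq_factorial_mul_choose]
    push_cast
    ring
  rw [hcast]
  set F := fun k => (j.choose k : ℚ) * ((k.factorial : ℚ) * (stirling n k : ℚ)) with hF
  have hzn : ∀ k, n < k → F k = 0 := fun k hk => by
    simp [hF, stirling_eq_zero hk]
  have hzj : ∀ k, j < k → F k = 0 := fun k hk => by
    simp [hF, Nat.choose_eq_zero_of_lt hk]
  rw [Finset.sum_subset (Finset.range_subset_range.2 (by omega : n + 1 ≤ n + j + 1))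
    (fun k _ hk => hzn k (by simp at hk ⊢; omega))]
  rw [Finset.sum_subset (Finset.range_subset_range.2 (by omega : j + 1 ≤ n + j + 1))
    (fun k _ hk => hzj k (by simp at hk ⊢; omega))]

lemma coeff_exp_sub_one_pow (n j : ℕ) :
    ∑ k ∈ Finset.range (j + 1), (j.choose k : ℚ) *
      ((n.factorial : ℚ) * PowerSeries.coeff (R := ℚ) n ((PowerSeries.exp ℚ - 1) ^ k)) =
    (j : ℚ) ^ n := by
  have h2 : (PowerSeries.exp ℚ) ^ j =
      ∑ k ∈ Finset.range (j + 1), (PowerSeries.exp ℚ - 1) ^ k *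
        (1 : PowerSeries ℚ) ^ (j - k) * ((j.choose k : ℕ) : PowerSeries ℚ) := by
    rw [← add_pow]
    ring_nf
  have h1 : PowerSeries.coeff (R := ℚ) n (PowerSeries.exp ℚ ^ j) = (j : ℚ) ^ n * (1 / n.factorial) := by
    rw [PowerSeries.exp_pow_eq_rescale_exp, PowerSeries.coeff_rescale, PowerSeries.coeff_exp]
    simp [algebraMap]
  rw [h2] at h1
  rw [map_sum] at h1
  have h3 : ∀ k ∈ Finset.range (j + 1),
      PowerSeries.coeff (R := ℚ) n ((PowerSeries.exp ℚ - 1) ^ k * (1 : PowerSeries ℚ) ^ (j - k) *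
        ((j.choose k : ℕ) : PowerSeries ℚ)) =
      (j.choose k : ℚ) * PowerSeries.coeff (R := ℚ) n ((PowerSeries.exp ℚ - 1) ^ k) := by
    intro k _
    rw [one_pow, mul_one]
    rw [show ((j.choose k : ℕ) : PowerSeries ℚ) = PowerSeries.C (R := ℚ) ((j.choose k : ℕ) : ℚ) by
      rw [map_natCast]]
    rw [mul_comm, PowerSeries.coeff_C_mul]
  rw [Finset.sum_congr rfl h3] at h1
  have hfac : (n.factorial : ℚ) ≠ 0 := Nat.cast_ne_zero.2 n.factorial_ne_zero
  calc ∑ k ∈ Finset.range (j + 1), (j.choose k : ℚ) *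
      ((n.factorial : ℚ) * PowerSeries.coeff (R := ℚ) n ((PowerSeries.exp ℚ - 1) ^ k))
      = (n.factorial : ℚ) * ∑ k ∈ Finset.range (j + 1), (j.choose k : ℚ) *
        PowerSeries.coeff (R := ℚ) n ((PowerSeries.exp ℚ - 1) ^ k) := by
        rw [Finset.mul_sum]; exact Finset.sum_congr rfl fun k _ => by ring
    _ = (n.factorial : ℚ) * ((j : ℚ) ^ n * (1 / n.factorial)) := by rw [← h1]
    _ = (j : ℚ) ^ n := by field_simp

lemma binom_match (a b : ℕ → ℚ)
    (h : ∀ j, ∑ k ∈ Finset.range (j + 1), (j.choose k : ℚ) * a k =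
      ∑ k ∈ Finset.range (j + 1), (j.choose k : ℚ) * b k) : ∀ k, a k = b k := by
  intro k
  induction k using Nat.strong_induction_on with
  | _ k ih =>
    have hk := h k
    rw [Finset.sum_range_succ, Finset.sum_range_succ,
      Finset.sum_congr rfl (fun i hi => by rw [ih i (Finset.mem_range.1 hi)])] at hk
    have := add_left_cancel hk
    simpa [Nat.choose_self] using this

lemma stirling_egf (n k : ℕ) :
    (n.factorial : ℚ) * PowerSeries.coeff (R := ℚ) n ((PowerSeries.exp ℚ - 1) ^ k) =
      (k.factorial : ℚ) * (stirling n k : ℚ) := by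
  exact binom_match
    (fun k => (n.factorial : ℚ) * PowerSeries.coeff (R := ℚ) n ((PowerSeries.exp ℚ - 1) ^ k))
    (fun k => (k.factorial : ℚ) * (stirling n k : ℚ))
    (fun j => by rw [coeff_exp_sub_one_pow n j, ← binom_id n j]) k

lemma bell_succ (m n : ℕ) :
    bell (m + 1) n = ∑ k ∈ Finset.range (n + 1), (stirling n k : ℚ) * bell m k := by
  rw [bell, E_comp m, coeff_psComp, Finset.mul_sum]
  refine Finset.sum_congr rfl fun k _ => ?_
  have h := stirling_egf n k
  rw [bell]
  calc (n.factorial : ℚ) * (PowerSeries.coeff (R := ℚ) k (E m) *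
      PowerSeries.coeff (R := ℚ) n ((PowerSeries.exp ℚ - 1) ^ k))
      = PowerSeries.coeff (R := ℚ) k (E m) *
        ((n.factorial : ℚ) * PowerSeries.coeff (R := ℚ) n ((PowerSeries.exp ℚ - 1) ^ k)) := by ring
    _ = PowerSeries.coeff (R := ℚ) k (E m) * ((k.factorial : ℚ) * (stirling n k : ℚ)) := by rw [h]
    _ = (stirling n k : ℚ) * ((k.factorial : ℚ) * PowerSeries.coeff (R := ℚ) k (E m)) := by ring

lemma hyperBell_eq_bell (m : ℕ) : ∀ n, (hyperBell m n : ℚ) = bell m n := by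
  induction m with
  | zero =>
    intro n
    rw [hyperBell_zero, bell]
    show (1 : ℚ) = (n.factorial : ℚ) * PowerSeries.coeff (R := ℚ) n (PowerSeries.exp ℚ)
    rw [PowerSeries.coeff_exp]
    have hfac : (n.factorial : ℚ) ≠ 0 := Nat.cast_ne_zero.2 n.factorial_ne_zero
    simp [algebraMap]
    field_simp
  | succ m ih =>
    intro n
    rw [hyperBell_succ, bell_succ]
    push_cast
    exact Finset.sum_congr rfl fun k _ => by rw [ih k]

end Count

/-- `S^(m)(n,1) = Bₙ^(m−1)` for `m ≥ 1`, `n ≥ 1`. -/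
theorem stmt14 (m n : ℕ) (hm : 1 ≤ m) (hn : 1 ≤ n) :
    (hyperStirling m n 1 : ℚ) = bell (m - 1) n := by
  obtain ⟨m', rfl⟩ : ∃ m', m = m' + 1 := ⟨m - 1, by omega⟩
  rw [Nat.add_sub_cancel, hyperStirling_one m' n hn, hyperBell_eq_bell]
end
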